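/- Let w be a permutation of {1,…,n}. Then w is a valley permutation if and only if w is both dominant and inverse fireworks; and w is an inverse valley permutation if and only if w is both dominant and fireworks. -/

import Mathlib

open scoped Classical

noncomputable section

namespace RajRegularity

variable {n : ℕ}

/-- Maximal length of an increasing subsequence of `w(i), …, w(n)` beginning with `w(i)`:
the largest cardinality of a set `s` of positions that contains `i`, consists of positions
`≥ i`, and on which `w` is strictly increasing. -/
def lisFrom (w : Equiv.Perm (Fin n)) (i : Fin n) : ℕ :=
  (Finset.univ.filter fun s : Finset (Fin n) =>
      i ∈ s ∧ (∀ j ∈ s, i ≤ j) ∧ ∀ j ∈ s, ∀ k ∈ s, j < k → w j < w k).sup Finset.card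

/-- `rajCode w i = (n − i + 1) −` (maximal length of an increasing subsequence of
`w(i), …, w(n)` beginning with `w(i)`); here positions are 0-based, so the number of
positions `≥ i` is `n - i`. -/
def rajCode (w : Equiv.Perm (Fin n)) (i : Fin n) : ℕ :=
  (n - (i : ℕ)) - lisFrom w i

/-- The Rajchgot index `raj w = Σᵢ rajCode w i`. -/
def raj (w : Equiv.Perm (Fin n)) : ℕ := ∑ i, rajCode w i

/-- The number of inversions of `w`: pairs of positions `i < j` with `w i > w j`. -/
def invNum (w : Equiv.Perm (Fin n)) : ℕ :=
  (Finset.univ.filter fun p : Fin n × Fin n => p.1 < p.2 ∧ w p.2 < w p.1).card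

/-- The `i`-th entry of the inv code: `ℓ_i(w) = #{ j : i < j, w j < w i }`. -/
def ellCode (w : Equiv.Perm (Fin n)) (i : Fin n) : ℕ :=
  (Finset.univ.filter fun j : Fin n => i < j ∧ w j < w i).card

/-- The set of descent positions of `w` (0-based position `j` with `w j > w (j+1)`). -/
def descents (w : Equiv.Perm (Fin n)) : Finset (Fin n) :=
  Finset.univ.filter fun j : Fin n =>
    if h : (j : ℕ) + 1 < n then w ⟨(j : ℕ) + 1, h⟩ < w j else False

/-- The major index: the sum of the (1-based) descent positions of `w`. -/
def maj (w : Equiv.Perm (Fin n)) : ℕ := ∑ j ∈ descents w, ((j : ℕ) + 1)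

/-- `mCode w i`: the number of descents of `w` at positions `≥ i`. -/
def mCode (w : Equiv.Perm (Fin n)) (i : Fin n) : ℕ :=
  ((descents w).filter fun j => i ≤ j).card

/-- `w` is dominant iff it avoids the pattern 132. -/
def Dominant (w : Equiv.Perm (Fin n)) : Prop :=
  ¬ ∃ i j k : Fin n, i < j ∧ j < k ∧ w i < w k ∧ w k < w j

/-- `w` is fireworks iff there are no positions `i < j` with `w j < w (j+1) < w i`. -/
def Fireworks (w : Equiv.Perm (Fin n)) : Prop :=
  ¬ ∃ (i j : Fin n) (h : (j : ℕ) + 1 < n),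
      i < j ∧ w j < w ⟨(j : ℕ) + 1, h⟩ ∧ w ⟨(j : ℕ) + 1, h⟩ < w i

/-- `w` is inverse fireworks iff `w⁻¹` is fireworks. -/
def InvFireworks (w : Equiv.Perm (Fin n)) : Prop := Fireworks w⁻¹

/-- `w` is a valley permutation: for some `a`, it is strictly decreasing on positions `≤ a`
and strictly increasing on positions `≥ a`. -/
def Valley (w : Equiv.Perm (Fin n)) : Prop :=
  ∃ a : ℕ, (∀ i j : Fin n, i < j → (j : ℕ) ≤ a → w j < w i) ∧
    ∀ i j : Fin n, a ≤ (i : ℕ) → i < j → w i < w j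

/-- `eps w i` is the (1-based) blob index `ε_i(w) = i + r_i(w)`. -/
def eps (w : Equiv.Perm (Fin n)) (i : Fin n) : ℕ := (i : ℕ) + 1 + rajCode w i

/-- The shape of `w`: `α_k(w) = #{ i : ε_i(w) = k }` (here `k : Fin n` stands for the
1-based index `k + 1`). -/
def shape (w : Equiv.Perm (Fin n)) : Fin n → ℕ := fun k =>
  (Finset.univ.filter fun i : Fin n => eps w i = (k : ℕ) + 1).card

/-- Dominance order on shapes: `α ⪰ β` iff every tail sum of `α` is at least the
corresponding tail sum of `β`. -/
def Dominates (α β : Fin n → ℕ) : Prop :=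
  ∀ m : Fin n,
    ∑ k ∈ Finset.univ.filter (fun k : Fin n => m ≤ k), β k ≤
      ∑ k ∈ Finset.univ.filter (fun k : Fin n => m ≤ k), α k

/-- Right weak order: `u ≤_R w` iff `w = u * v` length-additively. -/
def leR (u w : Equiv.Perm (Fin n)) : Prop :=
  ∃ v : Equiv.Perm (Fin n), w = u * v ∧ invNum w = invNum u + invNum v

/-- Left weak order: `u ≤_L w` iff `w = v * u` length-additively. -/
def leL (u w : Equiv.Perm (Fin n)) : Prop :=
  ∃ v : Equiv.Perm (Fin n), w = v * u ∧ invNum w = invNum v + invNum u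

/-- Two-sided weak order: the transitive closure of the union of left and right weak
orders (both are reflexive, so we may use the reflexive-transitive closure). -/
def leLR (u w : Equiv.Perm (Fin n)) : Prop :=
  Relation.ReflTransGen (fun a b : Equiv.Perm (Fin n) => leL a b ∨ leR a b) u w

/-- The maximum of the block of the set partition `π(w)` containing the value `v`;
the block of `v` is `{ v' : ε_{w⁻¹ v'}(w) = ε_{w⁻¹ v}(w) }`. -/
def blockMax (w : Equiv.Perm (Fin n)) (v : Fin n) : ℕ :=
  ((Finset.univ.filter fun v' : Fin n => eps w (w⁻¹ v') = eps w (w⁻¹ v)).max'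
      ⟨v, Finset.mem_filter.mpr ⟨Finset.mem_univ v, rfl⟩⟩).val

/-- The fireworks map `Φ`: the one-line word of `Φ w` lists the blocks of `π(w)` in
increasing order of their maxima, each block written in decreasing order.  Equivalently,
`Φ w` sorts the values by the key (max of block, value reversed), lexicographically. -/
def Phi (w : Equiv.Perm (Fin n)) : Equiv.Perm (Fin n) :=
  Tuple.sort fun v : Fin n => n * blockMax w v + (n - 1 - (v : ℕ))

/-- The inverse fireworks map `Φ_inv w = Φ(w⁻¹)⁻¹`. -/
def PhiInv (w : Equiv.Perm (Fin n)) : Equiv.Perm (Fin n) := (Phi w⁻¹)⁻¹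

/-- Partial sums of a sequence of block sizes. -/
def psum (a : ℕ → ℕ) (m : ℕ) : ℕ := ∑ j ∈ Finset.range m, a j

/-- The index of the block (interval `[psum a m, psum a (m+1))`) containing the value `v`. -/
def blockIdx (n : ℕ) (a : ℕ → ℕ) (v : Fin n) : ℕ :=
  ((Finset.range n).filter fun m => psum a (m + 1) ≤ (v : ℕ)).card

/-- The layered permutation with block sizes `a 0, a 1, …`: it reverses each of the
consecutive intervals `[psum a m, psum a (m+1))` of `{0, …, n-1}`.  Equivalently, its
one-line word sorts the values by (block index, value reversed) lexicographically. -/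
def layered (n : ℕ) (a : ℕ → ℕ) : Equiv.Perm (Fin n) :=
  Tuple.sort fun v : Fin n => n * blockIdx n a v + (n - 1 - (v : ℕ))

/-- The layered permutation `e_α` associated to a shape `α : Fin n → ℕ`. -/
def eOf (α : Fin n → ℕ) : Equiv.Perm (Fin n) :=
  layered n fun m => if h : m < n then α ⟨m, h⟩ else 0

private lemma dominant_inv {w : Equiv.Perm (Fin n)} (h : Dominant w) : Dominant w⁻¹ := by
  rintro ⟨i, j, k, hij, hjk, h1, h2⟩
  exact h ⟨w⁻¹ i, w⁻¹ k, w⁻¹ j, h1, h2, by simpa using hij, by simpa using hjk⟩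

private lemma valley_iff {w : Equiv.Perm (Fin n)} :
    Valley w ↔ Dominant w ∧ InvFireworks w := by
  constructor
  · rintro ⟨a, hdec, hinc⟩
    constructor
    · rintro ⟨i, j, k, hij, hjk, h1, h2⟩
      rcases le_or_gt a (j : ℕ) with h | h
      · exact absurd (hinc j k h hjk) (asymm h2)
      · exact absurd (h1.trans h2) (asymm (hdec i j hij h.le))
    · rintro ⟨i, j, h, hij, h1, h2⟩
      rcases le_or_gt a ((w⁻¹ (⟨(j : ℕ) + 1, h⟩ : Fin n) : Fin n) : ℕ) with hc | hc
      · have h3 := hinc _ _ hc h2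
        simp only [Equiv.Perm.coe_inv, Equiv.apply_symm_apply, Fin.lt_def] at h3
        have h4 : (i : ℕ) < (j : ℕ) := hij
        omega
      · have h3 := hdec _ _ h1 hc.le
        simp only [Equiv.Perm.coe_inv, Equiv.apply_symm_apply, Fin.lt_def] at h3
        omega
  · rintro ⟨hd, hf⟩
    rcases Nat.eq_zero_or_pos n with hn | hn
    · subst hn
      exact ⟨0, fun i => i.elim0, fun i => i.elim0⟩
    · set z : Fin n := ⟨0, hn⟩ with hz
      refine ⟨((w⁻¹ z : Fin n) : ℕ), ?_, ?_⟩
      · -- decreasing part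
        intro i j hij hja
        by_contra hcon
        have hne : w i ≠ w j := fun e => hij.ne (w.injective e)
        have hwij : w i < w j := lt_of_le_of_ne (not_lt.mp hcon) hne
        have hjz : j ≠ w⁻¹ z := by
          intro e
          rw [e] at hwij
          simp only [Equiv.Perm.coe_inv, Equiv.apply_symm_apply, Fin.lt_def] at hwij
          have : ((⟨0, hn⟩ : Fin n) : ℕ) = 0 := rfl
          omega
        have hja' : (j : ℕ) < ((w⁻¹ z : Fin n) : ℕ) :=
          lt_of_le_of_ne hja (fun e => hjz (Fin.ext e))
        have hiz : i ≠ w⁻¹ z := by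
          intro e
          have : (i : ℕ) < (j : ℕ) := hij
          omega
        have hwiz : (w i : ℕ) ≠ 0 := by
          intro e
          apply hiz
          have : w i = z := Fin.ext e
          rw [← this]; simp
        have hwjz : (w j : ℕ) ≠ 0 := by
          intro e
          apply hjz
          have : w j = z := Fin.ext e
          rw [← this]; simp
        set x : ℕ := (w i : ℕ) with hx
        set y : ℕ := (w j : ℕ) with hy
        have hxy : x < y := hwij
        have hy2 : 2 ≤ y := by omega
        have hyn : y < n := (w j).isLt
        have hy1n : y - 1 < n := by omega
        set q : Fin n := w⁻¹ ⟨y - 1, hy1n⟩ with hq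
        have hwq : w q = ⟨y - 1, hy1n⟩ := by simp [hq]
        have hqj : q < j := by
          rcases eq_or_lt_of_le (Nat.le_sub_one_of_lt hxy) with he | hlt
          · -- x = y - 1, so q = i
            have : (⟨y - 1, hy1n⟩ : Fin n) = w i := Fin.ext (by simp only [Fin.val_mk]; omega)
            rw [hq, this, Equiv.Perm.coe_inv, Equiv.symm_apply_apply]
            exact hij
          · -- x < y - 1
            have hqne : q ≠ j := by
              intro e
              have : w q = w j := by rw [e]
              rw [hwq] at this
              have := congrArg Fin.val this
              simp at this
              omega
            rcases lt_trichotomy q j with h | h | h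
            · exact h
            · exact absurd h hqne
            · exfalso
              apply hd
              refine ⟨i, j, q, hij, h, ?_, ?_⟩
              · rw [hwq]; exact hlt
              · rw [hwq]
                show y - 1 < y
                omega
        -- apply inverse fireworks
        apply hf
        have hstep : ((y - 1) : ℕ) + 1 < n := by omega
        refine ⟨z, ⟨y - 1, hy1n⟩, by simpa using hstep, ?_, ?_, ?_⟩
        · show (0 : ℕ) < y - 1
          omega
        · show w⁻¹ _ < w⁻¹ _
          have : (⟨(y - 1 : ℕ) + 1, by simpa using hstep⟩ : Fin n) = w j := Fin.ext (by simp; omega)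
          rw [this, Equiv.Perm.coe_inv, Equiv.symm_apply_apply]
          exact hqj
        · show w⁻¹ _ < w⁻¹ _
          have : (⟨(y - 1 : ℕ) + 1, by simpa using hstep⟩ : Fin n) = w j := Fin.ext (by simp; omega)
          rw [this, Equiv.Perm.coe_inv, Equiv.symm_apply_apply]
          exact hja'
      · -- increasing part
        intro i j hai hij
        rcases eq_or_lt_of_le hai with he | hlt
        · have hiz : i = w⁻¹ z := Fin.ext he.symm
          rw [hiz]
          simp only [Equiv.Perm.coe_inv, Equiv.apply_symm_apply]
          have : w j ≠ z := by
            intro e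
            have : j = w⁻¹ z := by rw [← e]; simp
            rw [← hiz] at this
            exact hij.ne' this
          have : (w j : ℕ) ≠ 0 := fun e => this (Fin.ext e)
          show (0 : ℕ) < (w j : ℕ)
          omega
        · by_contra hcon
          have hne : w i ≠ w j := fun e => hij.ne (w.injective e)
          have hwij : w j < w i := lt_of_le_of_ne (not_lt.mp hcon) (Ne.symm hne)
          apply hd
          refine ⟨w⁻¹ z, i, j, hlt, hij, ?_, hwij⟩
          simp only [Equiv.Perm.coe_inv, Equiv.apply_symm_apply]
          have hjz : j ≠ w⁻¹ z := by
            intro e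
            have : ((w⁻¹ z : Fin n) : ℕ) < (j : ℕ) := lt_trans hlt hij
            omega
          have : w j ≠ z := by
            intro e
            exact hjz (by rw [← e]; simp)
          show (0 : ℕ) < (w j : ℕ)
          have : (w j : ℕ) ≠ 0 := fun e => this (Fin.ext e)
          omega

/-- `w` is a valley permutation iff `w` is dominant and inverse fireworks;
`w` is an inverse valley permutation iff `w` is dominant and fireworks. -/
theorem valley_iff_dominant_and_fireworks (n : ℕ) (w : Equiv.Perm (Fin n)) :
    (Valley w ↔ Dominant w ∧ InvFireworks w) ∧
    (Valley w⁻¹ ↔ Dominant w ∧ Fireworks w) := by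
  have hdom : Dominant w ↔ Dominant w⁻¹ :=
    ⟨dominant_inv, fun h => by simpa using dominant_inv h⟩
  refine ⟨valley_iff, ?_⟩
  rw [valley_iff, ← hdom]
  have : InvFireworks w⁻¹ = Fireworks w := by
    unfold InvFireworks
    rw [inv_inv]
  rw [this]

end RajRegularity
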